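/- For each positive integer n define φ_n(z) = Σ_{j=n+1}^∞ (z^j/j)·(Σ_{d|j, d ≤ n} μ(d)), where μ is the Möbius function. Then ‖φ_n‖_{H²} → 0 as n → ∞. -/

import Mathlib

open ArithmeticFunction Filter

open Finset in
private noncomputable def hterm (n d e j : ℕ) : ℝ := if n < j ∧ d ∣ j ∧ e ∣ j then ((j:ℝ)^2)⁻¹ else 0

private lemma hterm_nonneg (n d e j : ℕ) : 0 ≤ hterm n d e j := by
  unfold hterm; split <;> positivity

private lemma hterm_summable (n d e : ℕ) : Summable (hterm n d e) := by
  refine Summable.of_nonneg_of_le (hterm_nonneg n d e) (fun j => ?_)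
    (Real.summable_nat_pow_inv.mpr one_lt_two)
  unfold hterm; split
  · exact le_rfl
  · positivity

private lemma pointwise_le (n j : ℕ) :
    (if n < j then
        (∑ d ∈ Nat.divisors j, if d ≤ n then (moebius d : ℝ) else 0) ^ 2 / (j : ℝ) ^ 2
      else 0)
    ≤ ∑ d ∈ Finset.Icc 1 n, ∑ e ∈ Finset.Icc 1 n, hterm n d e j := by
  by_cases hj : n < j
  · have hj0 : j ≠ 0 := by omega
    simp only [hj, if_true]
    have hiff : ∀ d : ℕ, d ∈ (Nat.divisors j).filter (· ≤ n) ↔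
        d ∈ (Finset.Icc 1 n).filter (· ∣ j) := by
      intro d
      simp only [Finset.mem_filter, Nat.mem_divisors, Finset.mem_Icc]
      constructor
      · rintro ⟨⟨hd, _⟩, hdn⟩
        exact ⟨⟨(Nat.pos_of_dvd_of_pos hd (Nat.pos_of_ne_zero hj0)), hdn⟩, hd⟩
      · rintro ⟨⟨_, hdn⟩, hd⟩
        exact ⟨⟨hd, hj0⟩, hdn⟩
    set c : ℝ := ∑ d ∈ Finset.Icc 1 n, (if d ∣ j then (1:ℝ) else 0) with hc
    have hc0 : 0 ≤ c := Finset.sum_nonneg (fun d _ => by split <;> norm_num)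
    have habs : |∑ d ∈ Nat.divisors j, if d ≤ n then (moebius d : ℝ) else 0| ≤ c := by
      refine (Finset.abs_sum_le_sum_abs _ _).trans ?_
      have h1 : ∀ d ∈ Nat.divisors j, |if d ≤ n then (moebius d : ℝ) else 0|
          ≤ (if d ≤ n then (1:ℝ) else 0) := by
        intro d _
        split
        · rw [← Int.cast_abs]; exact_mod_cast abs_moebius_le_one
        · simp
      refine (Finset.sum_le_sum h1).trans_eq ?_
      rw [hc, ← Finset.sum_filter, ← Finset.sum_filter, Finset.filter_congr_decidable,
        Finset.ext_iff.mpr hiff]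
    have hS2 : (∑ d ∈ Nat.divisors j, if d ≤ n then (moebius d : ℝ) else 0) ^ 2 ≤ c ^ 2 := by
      rw [← sq_abs]
      exact pow_le_pow_left₀ (abs_nonneg _) habs 2
    have hj2 : (0:ℝ) < (j:ℝ)^2 := by positivity
    calc (∑ d ∈ Nat.divisors j, if d ≤ n then (moebius d : ℝ) else 0) ^ 2 / (j : ℝ) ^ 2
        ≤ c ^ 2 / (j:ℝ)^2 := by gcongr
      _ = ∑ d ∈ Finset.Icc 1 n, ∑ e ∈ Finset.Icc 1 n, hterm n d e j := by
          rw [sq c, hc, Finset.sum_mul_sum, Finset.sum_div]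
          refine Finset.sum_congr rfl fun d _ => ?_
          rw [Finset.sum_div]
          refine Finset.sum_congr rfl fun e _ => ?_
          unfold hterm
          simp only [hj, true_and]
          split_ifs with h1 h2 h3 <;>
            simp_all [div_eq_mul_inv] <;> tauto
  · simp only [hj, if_false]
    exact Finset.sum_nonneg fun d _ => Finset.sum_nonneg fun e _ => hterm_nonneg n d e j

private lemma tail_bound {n d e : ℕ} (hd : d ∈ Finset.Icc 1 n) (he : e ∈ Finset.Icc 1 n) :
    (∑' j : ℕ, hterm n d e j) ≤ 2 / (n:ℝ) * ((Nat.lcm d e : ℝ))⁻¹ := by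
  obtain ⟨hd1, hdn⟩ := Finset.mem_Icc.mp hd
  obtain ⟨he1, hen⟩ := Finset.mem_Icc.mp he
  have hn1 : 1 ≤ n := le_trans hd1 hdn
  set L := Nat.lcm d e with hLdef
  have hL0 : 0 < L := Nat.pos_of_ne_zero (Nat.lcm_ne_zero (by omega) (by omega))
  have hinj : Function.Injective (fun m : ℕ => L * m) :=
    fun a b hab => Nat.eq_of_mul_eq_mul_left hL0 hab
  have hsupp : Function.support (hterm n d e) ⊆ Set.range (fun m : ℕ => L * m) := by
    intro j hj
    have : n < j ∧ d ∣ j ∧ e ∣ j := by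
      by_contra hcon
      exact hj (by unfold hterm; rw [if_neg hcon])
    obtain ⟨-, hdj, hej⟩ := this
    have hLj : L ∣ j := Nat.lcm_dvd hdj hej
    exact ⟨j / L, (Nat.mul_div_cancel' hLj)⟩
  rw [← hinj.tsum_eq hsupp]
  set K := n / L with hK
  have hterm_eq : ∀ m : ℕ, hterm n d e (L * m) =
      if K < m then ((L:ℝ)^2)⁻¹ * ((m:ℝ)^2)⁻¹ else 0 := by
    intro m
    unfold hterm
    have hcond : (n < L * m ∧ d ∣ L * m ∧ e ∣ L * m) ↔ K < m := by
      constructor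
      · rintro ⟨h1, -, -⟩
        exact Nat.div_lt_iff_lt_mul hL0 |>.mpr (by rw [mul_comm]; exact h1)
      · intro h1
        refine ⟨(Nat.div_lt_iff_lt_mul hL0 |>.mp h1).trans_eq (mul_comm m L), ?_, ?_⟩
        · exact Dvd.dvd.mul_right (Nat.dvd_lcm_left d e) m
        · exact Dvd.dvd.mul_right (Nat.dvd_lcm_right d e) m
    rw [if_congr hcond rfl rfl]
    split
    · push_cast
      rw [mul_pow, mul_inv]
    · rfl
  calc (∑' m : ℕ, hterm n d e (L * m))
      = ((L:ℝ)^2)⁻¹ * ∑' m : ℕ, (if K < m then ((m:ℝ)^2)⁻¹ else 0) := by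
        rw [← tsum_mul_left]
        exact tsum_congr fun m => by rw [hterm_eq m]; split <;> simp
    _ ≤ ((L:ℝ)^2)⁻¹ * (2 / ((K:ℝ) + 1)) := by
        gcongr
        refine Summable.tsum_le_of_sum_le ?_ (fun s => ?_)
        · refine Summable.of_nonneg_of_le (fun m => by split <;> positivity) (fun m => ?_)
            (Real.summable_nat_pow_inv.mpr one_lt_two)
          split
          · exact le_rfl
          · positivity
        · classical
          calc (∑ m ∈ s, if K < m then ((m:ℝ)^2)⁻¹ else 0)
              = ∑ m ∈ s.filter (K < ·), ((m:ℝ)^2)⁻¹ := by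
                rw [Finset.sum_filter]
            _ ≤ ∑ m ∈ Finset.Ioo K (s.sup _root_.id + 1), ((m:ℝ)^2)⁻¹ := by
                refine Finset.sum_le_sum_of_subset_of_nonneg (fun m hm => ?_)
                  (fun m _ _ => by positivity)
                simp only [Finset.mem_filter, Finset.mem_Ioo] at hm ⊢
                exact ⟨hm.2, Nat.lt_succ_of_le (Finset.le_sup (f := _root_.id) hm.1)⟩
            _ ≤ 2 / ((K:ℝ) + 1) := by
                have := sum_Ioo_inv_sq_le (α := ℝ) K (s.sup _root_.id + 1)
                simpa using this
    _ ≤ 2 / (n:ℝ) * ((L : ℝ))⁻¹ := by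
        have hnum : (n : ℝ) * L ≤ (L:ℝ)^2 * ((K:ℝ)+1) := by
          have h1 : n < L * (K + 1) := by
            have h0 := Nat.div_add_mod n L
            have h0' := Nat.mod_lt n hL0
            have h0'' : L * (K + 1) = L * (n / L) + L := by rw [hK]; ring
            omega
          have h2 : (n:ℝ) ≤ (L:ℝ) * ((K:ℝ)+1) := by exact_mod_cast h1.le
          calc (n:ℝ) * L ≤ ((L:ℝ) * ((K:ℝ)+1)) * L := by
                refine mul_le_mul_of_nonneg_right h2 (by positivity)
            _ = (L:ℝ)^2 * ((K:ℝ)+1) := by ring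
        rw [inv_mul_eq_div, div_div, mul_comm (2 / (n:ℝ)) _, inv_mul_eq_div, div_div]
        apply div_le_div_of_nonneg_left (by norm_num) (by positivity)
        calc (n:ℝ) * L ≤ (L:ℝ)^2 * ((K:ℝ)+1) := hnum
          _ = ((K:ℝ)+1) * (L:ℝ)^2 := by ring

private lemma lcm_sum_le (n : ℕ) :
    ∑ d ∈ Finset.Icc 1 n, ∑ e ∈ Finset.Icc 1 n, ((Nat.lcm d e : ℝ))⁻¹
      ≤ (∑ g ∈ Finset.Icc 1 n, ((g:ℝ))⁻¹) ^ 3 := by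
  classical
  set A := Finset.Icc 1 n with hA
  set i : ℕ × ℕ → ℕ × ℕ × ℕ := fun p =>
    (Nat.gcd p.1 p.2, p.1 / Nat.gcd p.1 p.2, p.2 / Nat.gcd p.1 p.2) with hi
  set F : ℕ × ℕ × ℕ → ℝ := fun q => ((q.1 : ℝ))⁻¹ * ((q.2.1 : ℝ))⁻¹ * ((q.2.2 : ℝ))⁻¹ with hF
  have key : ∀ p ∈ A ×ˢ A, ((Nat.lcm p.1 p.2 : ℝ))⁻¹ = F (i p) := by
    rintro ⟨d, e⟩ hp
    simp only [Finset.mem_product, hA, Finset.mem_Icc] at hp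
    obtain ⟨⟨hd1, hdn⟩, ⟨he1, hen⟩⟩ := hp
    set g := Nat.gcd d e with hg
    have hg0 : 0 < g := Nat.gcd_pos_of_pos_left e (by omega)
    have hlcm : Nat.lcm d e = g * (d / g) * (e / g) := by
      have h1 : g * Nat.lcm d e = d * e := Nat.gcd_mul_lcm d e
      have h2 : d = g * (d / g) := (Nat.mul_div_cancel' (Nat.gcd_dvd_left d e)).symm
      have h3 : e = g * (e / g) := (Nat.mul_div_cancel' (Nat.gcd_dvd_right d e)).symm
      have : g * Nat.lcm d e = g * (g * (d / g) * (e / g)) := by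
        rw [h1]; conv_lhs => rw [h2, h3]
        ring
      exact Nat.eq_of_mul_eq_mul_left hg0 this
    simp only [hF, hi]
    rw [hlcm]
    push_cast [Nat.cast_mul]
    rw [mul_inv, mul_inv]
  have hinj : ∀ p ∈ A ×ˢ A, ∀ p' ∈ A ×ˢ A, i p = i p' → p = p' := by
    rintro ⟨d, e⟩ hp ⟨d', e'⟩ hp' heq
    simp only [hi, Prod.mk.injEq] at heq
    obtain ⟨h1, h2, h3⟩ := heq
    have hd : d = Nat.gcd d e * (d / Nat.gcd d e) :=
      (Nat.mul_div_cancel' (Nat.gcd_dvd_left d e)).symm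
    have he : e = Nat.gcd d e * (e / Nat.gcd d e) :=
      (Nat.mul_div_cancel' (Nat.gcd_dvd_right d e)).symm
    have hd' : d' = Nat.gcd d' e' * (d' / Nat.gcd d' e') :=
      (Nat.mul_div_cancel' (Nat.gcd_dvd_left d' e')).symm
    have he' : e' = Nat.gcd d' e' * (e' / Nat.gcd d' e') :=
      (Nat.mul_div_cancel' (Nat.gcd_dvd_right d' e')).symm
    rw [h2, h1] at hd
    rw [h3, h1] at he
    exact Prod.ext (hd.trans hd'.symm) (he.trans he'.symm)
  have hmaps : ∀ p ∈ A ×ˢ A, i p ∈ A ×ˢ A ×ˢ A := by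
    rintro ⟨d, e⟩ hp
    simp only [Finset.mem_product, hA, Finset.mem_Icc] at hp ⊢
    obtain ⟨⟨hd1, hdn⟩, ⟨he1, hen⟩⟩ := hp
    have hg0 : 0 < Nat.gcd d e := Nat.gcd_pos_of_pos_left e (by omega)
    refine ⟨⟨hg0, le_trans (Nat.gcd_le_left e (by omega)) hdn⟩, ⟨⟨?_, ?_⟩, ?_, ?_⟩⟩
    · exact Nat.one_le_div_iff hg0 |>.mpr (Nat.le_of_dvd (by omega) (Nat.gcd_dvd_left d e))
    · exact le_trans (Nat.div_le_self d _) hdn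
    · exact Nat.one_le_div_iff hg0 |>.mpr (Nat.le_of_dvd (by omega) (Nat.gcd_dvd_right d e))
    · exact le_trans (Nat.div_le_self e _) hen
  have hcube : ∀ (s : Finset ℕ) (f : ℕ → ℝ),
      (∑ g ∈ s, f g) ^ 3 = ∑ g ∈ s, ∑ a ∈ s, ∑ b ∈ s, f g * f a * f b := by
    intro s f
    rw [pow_succ, sq, Finset.sum_mul_sum, Finset.sum_mul]
    refine Finset.sum_congr rfl fun g _ => ?_
    rw [Finset.sum_mul]
    refine Finset.sum_congr rfl fun a _ => ?_
    rw [Finset.mul_sum]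
  calc ∑ d ∈ A, ∑ e ∈ A, ((Nat.lcm d e : ℝ))⁻¹
      = ∑ p ∈ A ×ˢ A, ((Nat.lcm p.1 p.2 : ℝ))⁻¹ := by
        rw [← Finset.sum_product' (f := fun d e => ((Nat.lcm d e : ℝ))⁻¹)]
    _ = ∑ p ∈ A ×ˢ A, F (i p) := Finset.sum_congr rfl key
    _ = ∑ q ∈ (A ×ˢ A).image i, F q := (Finset.sum_image hinj).symm
    _ ≤ ∑ q ∈ A ×ˢ A ×ˢ A, F q := by
        refine Finset.sum_le_sum_of_subset_of_nonneg ?_ (fun q _ _ => by positivity)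
        intro q hq
        obtain ⟨p, hp, rfl⟩ := Finset.mem_image.mp hq
        exact hmaps p hp
    _ = (∑ g ∈ A, ((g:ℝ))⁻¹) ^ 3 := by
        rw [hcube]
        rw [Finset.sum_product]
        refine Finset.sum_congr rfl fun g _ => ?_
        rw [Finset.sum_product]

private lemma H_le (n : ℕ) : ∑ g ∈ Finset.Icc 1 n, ((g:ℝ))⁻¹ ≤ 1 + Real.log n := by
  have h1 : ∑ g ∈ Finset.Icc 1 n, ((g:ℝ))⁻¹ = (harmonic n : ℝ) := by
    rw [harmonic]
    push_cast
    induction n with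
    | zero => simp
    | succ k ih =>
      rw [Finset.sum_range_succ, ← ih, Finset.sum_Icc_succ_top (by omega)]
      push_cast
      ring
  rw [h1]
  exact harmonic_le_one_add_log n

private lemma bound_tendsto :
    Tendsto (fun n : ℕ => 2 / (n:ℝ) * (1 + Real.log n) ^ 3) atTop (nhds 0) := by
  have hx : Tendsto (fun x : ℝ => 2 / x * (1 + Real.log x) ^ 3) atTop (nhds 0) := by
    have h0 := Real.tendsto_pow_log_div_mul_add_atTop 1 0 0 one_ne_zero
    have h1 := Real.tendsto_pow_log_div_mul_add_atTop 1 0 1 one_ne_zero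
    have h2 := Real.tendsto_pow_log_div_mul_add_atTop 1 0 2 one_ne_zero
    have h3 := Real.tendsto_pow_log_div_mul_add_atTop 1 0 3 one_ne_zero
    have hcomb := (((h0.const_mul 2).add (h1.const_mul 6)).add (h2.const_mul 6)).add
      (h3.const_mul 2)
    simp only [mul_zero, add_zero, zero_add] at hcomb
    refine hcomb.congr fun x => ?_
    ring
  have := hx.comp tendsto_natCast_atTop_atTop (α := ℕ)
  exact this

/-- with φ_n(z) = Σ_{j>n} (z^j/j)·(Σ_{d|j, d≤n} μ(d)), the H² norm
    ‖φ_n‖ = √(Σ_{j>n} (Σ_{d|j, d≤n} μ(d))²/j²) tends to 0 as n → ∞. -/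
theorem stmt11 :
    Tendsto (fun n : ℕ => Real.sqrt (∑' j : ℕ,
        if n < j then
          (∑ d ∈ Nat.divisors j, if d ≤ n then (moebius d : ℝ) else 0) ^ 2 / (j : ℝ) ^ 2
        else 0))
      atTop (nhds 0) := by
  set T : ℕ → ℝ := fun n => ∑' j : ℕ,
      (if n < j then
        (∑ d ∈ Nat.divisors j, if d ≤ n then (moebius d : ℝ) else 0) ^ 2 / (j : ℝ) ^ 2
      else 0) with hT
  have hnonneg : ∀ n, 0 ≤ T n :=
    fun n => tsum_nonneg (fun j => by split <;> positivity)
  have hkey : ∀ n : ℕ, 1 ≤ n → T n ≤ 2 / (n:ℝ) * (1 + Real.log n) ^ 3 := by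
    intro n hn
    have hGsum : ∀ d, Summable (fun j => ∑ e ∈ Finset.Icc 1 n, hterm n d e j) :=
      fun d => summable_sum (fun e _ => hterm_summable n d e)
    have hG : Summable (fun j => ∑ d ∈ Finset.Icc 1 n, ∑ e ∈ Finset.Icc 1 n, hterm n d e j) :=
      summable_sum (fun d _ => hGsum d)
    have hf : Summable (fun j : ℕ =>
        if n < j then
          (∑ d ∈ Nat.divisors j, if d ≤ n then (moebius d : ℝ) else 0) ^ 2 / (j : ℝ) ^ 2
        else 0) :=
      Summable.of_nonneg_of_le (fun j => by split <;> positivity)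
        (pointwise_le n) hG
    have hH0 : (0:ℝ) ≤ ∑ g ∈ Finset.Icc 1 n, ((g:ℝ))⁻¹ :=
      Finset.sum_nonneg fun g _ => by positivity
    calc T n ≤ ∑' j, ∑ d ∈ Finset.Icc 1 n, ∑ e ∈ Finset.Icc 1 n, hterm n d e j :=
          Summable.tsum_le_tsum (pointwise_le n) hf hG
      _ = ∑ d ∈ Finset.Icc 1 n, ∑' j, ∑ e ∈ Finset.Icc 1 n, hterm n d e j :=
          Summable.tsum_finsetSum (fun d _ => hGsum d)
      _ = ∑ d ∈ Finset.Icc 1 n, ∑ e ∈ Finset.Icc 1 n, ∑' j, hterm n d e j :=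
          Finset.sum_congr rfl fun d _ => Summable.tsum_finsetSum (fun e _ => hterm_summable n d e)
      _ ≤ ∑ d ∈ Finset.Icc 1 n, ∑ e ∈ Finset.Icc 1 n,
            2 / (n:ℝ) * ((Nat.lcm d e : ℝ))⁻¹ :=
          Finset.sum_le_sum (fun d hd => Finset.sum_le_sum (fun e he => tail_bound hd he))
      _ = 2 / (n:ℝ) * ∑ d ∈ Finset.Icc 1 n, ∑ e ∈ Finset.Icc 1 n, ((Nat.lcm d e : ℝ))⁻¹ := by
          rw [Finset.mul_sum]
          exact Finset.sum_congr rfl fun d _ => (Finset.mul_sum _ _ _).symm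
      _ ≤ 2 / (n:ℝ) * (∑ g ∈ Finset.Icc 1 n, ((g:ℝ))⁻¹) ^ 3 := by
          have h2n : (0:ℝ) ≤ 2 / (n:ℝ) := by positivity
          exact mul_le_mul_of_nonneg_left (lcm_sum_le n) h2n
      _ ≤ 2 / (n:ℝ) * (1 + Real.log n) ^ 3 := by
          have h2n : (0:ℝ) ≤ 2 / (n:ℝ) := by positivity
          exact mul_le_mul_of_nonneg_left (pow_le_pow_left₀ hH0 (H_le n) 3) h2n
  have hTto : Tendsto T atTop (nhds 0) := by
    refine tendsto_of_tendsto_of_tendsto_of_le_of_le' tendsto_const_nhds bound_tendsto ?_ ?_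
    · exact Eventually.of_forall hnonneg
    · filter_upwards [eventually_ge_atTop 1] with n hn using hkey n hn
  have hc := (Real.continuous_sqrt.tendsto 0).comp hTto
  rw [Real.sqrt_zero] at hc
  exact hc
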